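/- Let T be a natural number and let N ≥ 2^(2^T) + 1. For any permutations π_1, …, π_T of Fin N, there exist items a < b < c in Fin N such that for every i ∈ {1,…,T}, either a, b, c appear in π_i in this order (the position of a precedes that of b, which precedes that of c) or they appear in the reverse order c, b, a. -/

import Mathlib

/-- The outcome of a cascaded test `t` (a list of items) on a defective set `S`:
the first element of `t` belonging to `S`, or `none` if there is none. -/
def outcome {N : ℕ} (t : List (Fin N)) (S : Finset (Fin N)) : Option (Fin N) :=
  (t.filter (fun x => x ∈ S)).head?

/-- A testing design `𝒯` (an indexed family of tests) is feasible for `(N, K)` if the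
map sending each `S ⊆ Fin N` with `|S| ≤ K` to its vector of test outcomes is injective
on `{S | |S| ≤ K}`. -/
def Feasible (N K : ℕ) {T : ℕ} (𝒯 : Fin T → List (Fin N)) : Prop :=
  Set.InjOn (fun (S : Finset (Fin N)) => fun i : Fin T => outcome (𝒯 i) S)
    {S : Finset (Fin N) | S.card ≤ K}

/-- `TNK N K`: the minimum number of tests over all duplicate-free testing designs
feasible for `(N, K)`. -/
noncomputable def TNK (N K : ℕ) : ℕ :=
  sInf {T : ℕ | ∃ 𝒯 : Fin T → List (Fin N), (∀ i, (𝒯 i).Nodup) ∧ Feasible N K 𝒯}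

/-- `fT 𝒯 S v`: the number of tests in the design `𝒯` whose outcome on `S` is `some v`. -/
def fT {N T : ℕ} (𝒯 : Fin T → List (Fin N)) (S : Finset (Fin N)) (v : Fin N) : ℕ :=
  (Finset.univ.filter (fun i : Fin T => outcome (𝒯 i) S = some v)).card

/-- A design is in systematic form if every test is nonempty and the first element of
each test does not occur in any other test. -/
def Systematic {N T : ℕ} (𝒯 : Fin T → List (Fin N)) : Prop :=
  ∀ i : Fin T, 𝒯 i ≠ [] ∧ ∀ u : Fin N, (𝒯 i).head? = some u → ∀ j : Fin T, j ≠ i → u ∉ 𝒯 j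


open Function Finset

theorem my_erdos_szekeres {α : Type*} [LinearOrder α] {r s n : ℕ} {f : Fin n → α}
    (hn : r * s < n) (hf : Injective f) :
    (∃ t : Finset (Fin n), r < #t ∧ StrictMonoOn f ↑t) ∨
      ∃ t : Finset (Fin n), s < #t ∧ StrictAntiOn f ↑t := by
  let inc_sequences_ending_in : Fin n → Finset (Finset (Fin n)) := fun i =>
    univ.powerset.filter fun t => Finset.max t = i ∧ StrictMonoOn f ↑t
  let dec_sequences_ending_in : Fin n → Finset (Finset (Fin n)) := fun i =>
    univ.powerset.filter fun t => Finset.max t = i ∧ StrictAntiOn f ↑t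
  have inc_i : ∀ i, {i} ∈ inc_sequences_ending_in i := fun i => by
    simp [inc_sequences_ending_in, StrictMonoOn]
  have dec_i : ∀ i, {i} ∈ dec_sequences_ending_in i := fun i => by
    simp [dec_sequences_ending_in, StrictAntiOn]
  let ab' : Fin n → ℕ × ℕ := by
    intro i
    apply
      (max' ((inc_sequences_ending_in i).image card) (Nonempty.image ⟨{i}, inc_i i⟩ _),
        max' ((dec_sequences_ending_in i).image card) (Nonempty.image ⟨{i}, dec_i i⟩ _))
  generalize hab : ab' = ab
  rsuffices ⟨i, hi⟩ : ∃ i, r < (ab i).1 ∨ s < (ab i).2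
  · refine Or.imp ?_ ?_ hi
    on_goal 1 =>
      have : (ab i).1 ∈ image card (inc_sequences_ending_in i) := by
        simp only [← hab]; exact max'_mem _ (Nonempty.image ⟨{i}, inc_i i⟩ _)
    on_goal 2 =>
      have : (ab i).2 ∈ image card (dec_sequences_ending_in i) := by
        simp only [← hab]; exact max'_mem _ (Nonempty.image ⟨{i}, dec_i i⟩ _)
    all_goals
      intro hi
      rw [mem_image] at this
      obtain ⟨t, ht₁, ht₂⟩ := this
      refine ⟨t, by rwa [ht₂], ?_⟩
      rw [mem_filter] at ht₁
      apply ht₁.2.2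
  have : Injective ab := by
    simp only [← hab]
    apply Function.Injective.of_lt_imp_ne
    intro i j k q
    injection q with q₁ q₂
    cases lt_or_gt_of_ne fun _ => ne_of_lt ‹i < j› (hf ‹f i = f j›)
    on_goal 1 =>
      apply ne_of_lt _ q₁
      have : (ab' i).1 ∈ image card (inc_sequences_ending_in i) := by exact max'_mem _ (Nonempty.image ⟨{i}, inc_i i⟩ _)
    on_goal 2 =>
      apply ne_of_lt _ q₂
      have : (ab' i).2 ∈ image card (dec_sequences_ending_in i) := by exact max'_mem _ (Nonempty.image ⟨{i}, dec_i i⟩ _)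
    all_goals
      rw [Nat.lt_iff_add_one_le]
      apply le_max'
      rw [mem_image] at this ⊢
      rcases this with ⟨t, ht₁, ht₂⟩
      rw [mem_filter] at ht₁
      have : t.max = i := by simp only [ht₁.2.1]
      refine ⟨insert j t, ?_, ?_⟩
      · rw [mem_filter]
        refine ⟨?_, ?_, ?_⟩
        · rw [mem_powerset]; apply subset_univ
        · convert max_insert (a := j) (s := t)
          rw [ht₁.2.1, max_eq_left]
          apply WithBot.coe_le_coe.mpr (le_of_lt ‹i < j›)
        simp only [StrictMonoOn, StrictAntiOn, coe_insert, Set.mem_insert_iff, mem_coe]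
        rintro x ⟨rfl | _⟩ y ⟨rfl | _⟩ _
        · apply (irrefl _ ‹j < j›).elim
        · exfalso
          apply not_le_of_gt (_root_.trans ‹i < j› ‹j < y›) (le_max_of_eq ‹y ∈ t› ‹t.max = i›)
        · first
          | apply lt_of_le_of_lt _ ‹f i < f j›
          | apply lt_of_lt_of_le ‹f j < f i› _
          rcases lt_or_eq_of_le (le_max_of_eq ‹x ∈ t› ‹t.max = i›) with (_ | rfl)
          · apply le_of_lt (ht₁.2.2 ‹x ∈ t› (mem_of_max ‹t.max = i›) ‹x < i›)
          · rfl
        · apply ht₁.2.2 ‹x ∈ t› ‹y ∈ t› ‹x < y›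
      · rw [card_insert_of_notMem, ht₂]
        intro
        apply not_le_of_gt ‹i < j› (le_max_of_eq ‹j ∈ t› ‹t.max = i›)
  by_contra! q
  let ran : Finset (ℕ × ℕ) := (range r).image Nat.succ ×ˢ (range s).image Nat.succ
  have : image ab univ ⊆ ran := by
    rintro ⟨x₁, x₂⟩
    simp only [ran, mem_image, exists_prop, mem_range, mem_univ, mem_product, true_and,
      Prod.ext_iff]
    rintro ⟨i, rfl, rfl⟩
    specialize q i
    have z : 1 ≤ (ab i).1 ∧ 1 ≤ (ab i).2 := by
      simp only [← hab]
      constructor <;>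
        · apply le_max'
          rw [mem_image]
          exact ⟨{i}, by solve_by_elim, card_singleton i⟩
    exact ⟨⟨(ab i).1 - 1, by omega⟩, (ab i).2 - 1, by omega⟩
  apply not_le_of_gt hn
  simpa [ran, Nat.succ_injective, card_image_of_injective, ‹Injective ab›] using card_le_card this
open Finset

theorem key (N : ℕ) : ∀ T : ℕ, ∀ (π : Fin T → Equiv.Perm (Fin N)) (S : Finset (Fin N)),
    2 ^ 2 ^ T < S.card →
    ∃ a b c : Fin N, a ∈ S ∧ b ∈ S ∧ c ∈ S ∧ a < b ∧ b < c ∧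
      ∀ i : Fin T,
        ((π i)⁻¹ a < (π i)⁻¹ b ∧ (π i)⁻¹ b < (π i)⁻¹ c) ∨
        ((π i)⁻¹ c < (π i)⁻¹ b ∧ (π i)⁻¹ b < (π i)⁻¹ a) := by
  intro T
  induction T with
  | zero =>
    intro π S hS
    simp only [pow_zero, pow_one] at hS
    have h3 : 3 ≤ (S.sort (· ≤ ·)).length := by rwa [Finset.length_sort]
    have hsorted := Finset.sortedLT_sort S
    set l := S.sort (· ≤ ·) with hl
    have mem : ∀ k (hk : k < l.length), l.get ⟨k, hk⟩ ∈ S := fun k hk =>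
      (Finset.mem_sort _).1 (List.get_mem l ⟨k, hk⟩)
    refine ⟨l.get ⟨0, by omega⟩, l.get ⟨1, by omega⟩, l.get ⟨2, by omega⟩,
      mem 0 _, mem 1 _, mem 2 _, ?_, ?_, fun i => i.elim0⟩
    · exact List.SortedLT.strictMono_get hsorted (by simp)
    · exact List.SortedLT.strictMono_get hsorted (by simp)
  | succ T ih =>
    intro π S hS
    set n := S.card with hn
    have hcard : 2 ^ 2 ^ T * 2 ^ 2 ^ T < n := by
      rw [← pow_add]
      rwa [pow_succ, mul_two] at hS
    set e : Fin n → Fin N := fun k => (S.orderIsoOfFin rfl k : Fin N) with he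
    have hemono : StrictMono e := fun i j h => (S.orderIsoOfFin rfl).strictMono h
    have hemem : ∀ k, e k ∈ S := fun k => (S.orderIsoOfFin rfl k).2
    set f : Fin n → Fin N := fun k => (π (Fin.last T))⁻¹ (e k) with hf
    have hfinj : Function.Injective f :=
      (Equiv.injective _).comp hemono.injective
    rcases my_erdos_szekeres hcard hfinj with ⟨t, ht, hmono⟩ | ⟨t, ht, hanti⟩
    all_goals {
      set S' : Finset (Fin N) := t.image e with hS'
      have hScard : 2 ^ 2 ^ T < S'.card := by
        rwa [hS', Finset.card_image_of_injective _ hemono.injective]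
      obtain ⟨a, b, c, ha, hb, hc, hab, hbc, hall⟩ :=
        ih (fun j => π j.castSucc) S' hScard
      obtain ⟨x, hx, rfl⟩ := Finset.mem_image.1 ha
      obtain ⟨y, hy, rfl⟩ := Finset.mem_image.1 hb
      obtain ⟨z, hz, rfl⟩ := Finset.mem_image.1 hc
      have hxy : x < y := hemono.lt_iff_lt.1 hab
      have hyz : y < z := hemono.lt_iff_lt.1 hbc
      refine ⟨e x, e y, e z, hemem x, hemem y, hemem z, hab, hbc, ?_⟩
      intro i
      refine Fin.lastCases ?_ (fun j => hall j) i
      first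
      | exact Or.inl ⟨hmono hx hy hxy, hmono hy hz hyz⟩
      | exact Or.inr ⟨hanti hy hz hyz, hanti hx hy hxy⟩ }


theorem stmt13 (T N : ℕ) (hN : 2 ^ 2 ^ T + 1 ≤ N)
    (π : Fin T → Equiv.Perm (Fin N)) :
    ∃ a b c : Fin N, a < b ∧ b < c ∧
      ∀ i : Fin T,
        ((π i)⁻¹ a < (π i)⁻¹ b ∧ (π i)⁻¹ b < (π i)⁻¹ c) ∨
        ((π i)⁻¹ c < (π i)⁻¹ b ∧ (π i)⁻¹ b < (π i)⁻¹ a) := by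
  obtain ⟨a, b, c, -, -, -, hab, hbc, h⟩ :=
    key N T π Finset.univ (by simpa [Finset.card_univ] using hN)
  exact ⟨a, b, c, hab, hbc, h⟩
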